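/- Let φ:[0,∞)→(0,∞) be an increasing C¹ function with φ(s)=exp(θ(1-ω₀)∫_{s₀/(4c)}^s dt/(t·a^q(t))) for all s ≥ s₀/(4c), where θ>0 and c>0 are constants. Assume M(k)<∞ for all k>0 as above. Then for each k>0 there exists a constant L(k)>0 such that φ(ks) ≤ L(k)·φ(s) for all s ≥ 0. -/

import Mathlib

open Real Set MeasureTheory intervalIntegral

theorem stmt3 (q lam₀ s₀ ω₀ θ c : ℝ) (a Λ φ : ℝ → ℝ)
    (hq : 1 < q) (hω₀ : ω₀ ∈ Set.Ioo (0:ℝ) 1) (hθ : 0 < θ) (hc : 0 < c)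
    (hs₀ : 0 < s₀) (hlam₀ : 1 < lam₀) (hs₀lam₀ : s₀ ≤ lam₀)
    (ha_pos : ∀ t, 0 < a t) (ha_cont : Continuous a)
    (hΛ_ge : ∀ t ≥ s₀, Λ t ≥ t)
    (hΛ_inv : ∀ l ≥ lam₀, Λ (l / a l) = l)
    (hM : ∀ k : ℝ, 0 < k →
      ∃ M : ℝ, ∀ s ≥ s₀ / k, (∫ t in s..(Λ (k * s)), 1 / (t * a t ^ q)) ≤ M)
    (hφ_pos : ∀ s ≥ (0:ℝ), 0 < φ s)
    (hφ_mono : MonotoneOn φ (Set.Ici 0))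
    (hφ_C1 : ContDiffOn ℝ 1 φ (Set.Ici 0))
    (hφ_eq : ∀ s ≥ s₀ / (4 * c),
      φ s = Real.exp (θ * (1 - ω₀) * ∫ t in (s₀ / (4 * c))..s, 1 / (t * a t ^ q))) :
    ∀ k : ℝ, 0 < k → ∃ L : ℝ, 0 < L ∧ ∀ s ≥ (0:ℝ), φ (k * s) ≤ L * φ s := by
  intro k hk
  rcases le_or_gt k 1 with hk1 | hk1
  · refine ⟨1, one_pos, fun s hs => ?_⟩
    rw [one_mul]
    exact hφ_mono (mul_nonneg hk.le hs) hs (by nlinarith)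
  · -- k > 1
    set f : ℝ → ℝ := fun t => 1 / (t * a t ^ q) with hf
    have hf_cont : ContinuousOn f (Set.Ioi 0) := by
      apply ContinuousOn.div continuousOn_const
      · exact (continuous_id.mul
          (ha_cont.rpow_const (fun t => Or.inl (ha_pos t).ne'))).continuousOn
      · intro t ht
        exact (mul_pos ht (Real.rpow_pos_of_pos (ha_pos t) q)).ne'
    have hf_nonneg : ∀ t : ℝ, 0 < t → 0 ≤ f t := fun t ht =>
      le_of_lt (one_div_pos.mpr (mul_pos ht (Real.rpow_pos_of_pos (ha_pos t) q)))
    have hint : ∀ x y : ℝ, 0 < x → 0 < y → IntervalIntegrable f volume x y := by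
      intro x y hx hy
      apply ContinuousOn.intervalIntegrable
      apply hf_cont.mono
      intro t ht
      rw [Set.uIcc_eq_union] at ht
      rcases ht with ht | ht
      · exact lt_of_lt_of_le hx ht.1
      · exact lt_of_lt_of_le hy ht.1
    set S₀ := s₀ / (4 * c) with hS₀def
    have hS₀pos : 0 < S₀ := div_pos hs₀ (by linarith)
    set T := max S₀ (s₀ / k) with hT
    have hTpos : 0 < T := lt_of_lt_of_le hS₀pos (le_max_left _ _)
    obtain ⟨M, hMk⟩ := hM k hk
    have hφ0 : 0 < φ 0 := hφ_pos 0 le_rfl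
    have hc₁ : 0 < θ * (1 - ω₀) := by
      have := hω₀.2; nlinarith
    refine ⟨max (Real.exp (θ * (1 - ω₀) * M)) (φ (k * T) / φ 0),
      lt_of_lt_of_le (Real.exp_pos _) (le_max_left _ _), fun s hs => ?_⟩
    rcases le_or_gt T s with hsT | hsT
    · -- large s
      have hsS₀ : S₀ ≤ s := le_trans (le_max_left _ _) hsT
      have hspos : 0 < s := lt_of_lt_of_le hS₀pos hsS₀
      have hsks : s ≤ k * s := by nlinarith
      have hksS₀ : S₀ ≤ k * s := hsS₀.trans hsks
      have hss₀k : s₀ / k ≤ s := le_trans (le_max_right _ _) hsT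
      have hks_s₀ : s₀ ≤ k * s := by
        rw [div_le_iff₀ hk] at hss₀k; linarith [hss₀k]
      have hkspos : 0 < k * s := lt_of_lt_of_le hs₀ hks_s₀
      have hΛks : k * s ≤ Λ (k * s) := hΛ_ge _ hks_s₀
      have hΛpos : 0 < Λ (k * s) := lt_of_lt_of_le hkspos hΛks
      -- bound the middle integral
      have hB : (∫ t in s..(k * s), f t) ≤ M := by
        have hsplit : (∫ t in s..(Λ (k * s)), f t)
            = (∫ t in s..(k * s), f t) + ∫ t in (k * s)..(Λ (k * s)), f t :=
          (intervalIntegral.integral_add_adjacent_intervals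
            (hint _ _ hspos hkspos) (hint _ _ hkspos hΛpos)).symm
        have hnn : 0 ≤ ∫ t in (k * s)..(Λ (k * s)), f t := by
          apply intervalIntegral.integral_nonneg hΛks
          intro u hu
          exact hf_nonneg u (lt_of_lt_of_le hkspos hu.1)
        have := hMk s hss₀k
        simp only [hf] at hsplit hnn ⊢
        linarith
      have h1 : φ s = Real.exp (θ * (1 - ω₀) * ∫ t in S₀..s, f t) := hφ_eq s hsS₀
      have h2 : φ (k * s) = Real.exp (θ * (1 - ω₀) * ∫ t in S₀..(k * s), f t) :=
        hφ_eq _ hksS₀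
      have hsplit2 : (∫ t in S₀..(k * s), f t)
          = (∫ t in S₀..s, f t) + ∫ t in s..(k * s), f t :=
        (intervalIntegral.integral_add_adjacent_intervals
          (hint _ _ hS₀pos hspos) (hint _ _ hspos hkspos)).symm
      have hkey : φ (k * s) ≤ Real.exp (θ * (1 - ω₀) * M) * φ s := by
        rw [h1, h2, hsplit2, mul_add, Real.exp_add, mul_comm]
        apply mul_le_mul_of_nonneg_right _ (Real.exp_pos _).le
        exact Real.exp_le_exp.mpr (mul_le_mul_of_nonneg_left hB hc₁.le)
      calc φ (k * s) ≤ Real.exp (θ * (1 - ω₀) * M) * φ s := hkey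
        _ ≤ max (Real.exp (θ * (1 - ω₀) * M)) (φ (k * T) / φ 0) * φ s :=
          mul_le_mul_of_nonneg_right (le_max_left _ _) (hφ_pos s hs).le
    · -- small s
      have hks_nonneg : (0:ℝ) ≤ k * s := mul_nonneg hk.le hs
      have h1 : φ (k * s) ≤ φ (k * T) := by
        apply hφ_mono hks_nonneg (mul_pos hk hTpos).le
        nlinarith
      have h2 : φ 0 ≤ φ s := hφ_mono (le_refl (0:ℝ)) hs hs
      have : φ (k * s) ≤ φ (k * T) / φ 0 * φ s := by
        rw [div_mul_eq_mul_div, le_div_iff₀ hφ0]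
        calc φ (k * s) * φ 0 ≤ φ (k * T) * φ 0 :=
              mul_le_mul_of_nonneg_right h1 hφ0.le
          _ ≤ φ (k * T) * φ s :=
              mul_le_mul_of_nonneg_left h2 (hφ_pos _ (mul_pos hk hTpos).le).le
      calc φ (k * s) ≤ φ (k * T) / φ 0 * φ s := this
        _ ≤ max (Real.exp (θ * (1 - ω₀) * M)) (φ (k * T) / φ 0) * φ s :=
          mul_le_mul_of_nonneg_right (le_max_right _ _) (hφ_pos s hs).le
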